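/- Let m and m* be ℝ^d-valued random vectors with square-integrable components and all pairwise products integrable. Set G := E(m·m*ᵀ) and G* := E(m*·m*ᵀ), and suppose G and G* are invertible d×d matrices. Then the difference of sandwich matrices G⁻¹·E(m·mᵀ)·(G⁻¹)ᵀ − (G*)⁻¹ is positive semidefinite. (This is the key inequality showing that the generalized-method-of-moments estimator built from the estimating function m* attains the minimum asymptotic variance among those built from estimating functions m whose cross moment with m* equals their own Jacobian matrix G.) -/

import Mathlib

open MeasureTheory ProbabilityTheory Matrix

section Aux

variable {Ω : Type*} [MeasurableSpace Ω] {μ : Measure Ω} {d : ℕ}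

lemma gmm_aux_integrable (f g : Ω → Fin d → ℝ)
    (h : ∀ k j, Integrable (fun ω => f ω k * g ω j) μ) (a b : Fin d → ℝ) :
    Integrable (fun ω => (∑ k, a k * f ω k) * (∑ j, b j * g ω j)) μ := by
  have : (fun ω => (∑ k, a k * f ω k) * (∑ j, b j * g ω j))
      = fun ω => ∑ k, ∑ j, (a k * b j) * (f ω k * g ω j) := by
    funext ω
    rw [Finset.sum_mul_sum]
    exact Finset.sum_congr rfl fun k _ => Finset.sum_congr rfl fun j _ => by ring
  rw [this]
  exact integrable_finset_sum _ fun k _ => integrable_finset_sum _ fun j _ =>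
    ((h k j).const_mul _)

lemma gmm_aux_integral (f g : Ω → Fin d → ℝ)
    (h : ∀ k j, Integrable (fun ω => f ω k * g ω j) μ) (a b : Fin d → ℝ) :
    ∫ ω, (∑ k, a k * f ω k) * (∑ j, b j * g ω j) ∂μ
      = ∑ k, ∑ j, a k * b j * ∫ ω, f ω k * g ω j ∂μ := by
  have h1 : (fun ω => (∑ k, a k * f ω k) * (∑ j, b j * g ω j))
      = fun ω => ∑ k, ∑ j, (a k * b j) * (f ω k * g ω j) := by
    funext ω
    rw [Finset.sum_mul_sum]
    exact Finset.sum_congr rfl fun k _ => Finset.sum_congr rfl fun j _ => by ring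
  rw [h1, integral_finset_sum _ fun k _ => integrable_finset_sum _ fun j _ =>
    ((h k j).const_mul _)]
  refine Finset.sum_congr rfl fun k _ => ?_
  rw [integral_finset_sum _ fun j _ => ((h k j).const_mul _)]
  exact Finset.sum_congr rfl fun j _ => integral_const_mul _ _

lemma gmm_dot_expand {N : Matrix (Fin d) (Fin d) ℝ} (a b : Fin d → ℝ) :
    a ⬝ᵥ N *ᵥ b = ∑ k, ∑ j, a k * b j * N k j := by
  simp only [dotProduct, mulVec, Finset.mul_sum]
  exact Finset.sum_congr rfl fun k _ => Finset.sum_congr rfl fun j _ => by ring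

end Aux

/-- GMM efficiency inequality: if `G = E(m m*ᵀ)` and `G* = E(m* m*ᵀ)` are
invertible, then `G⁻¹ E(m mᵀ) G⁻ᵀ − (G*)⁻¹` is positive semidefinite. -/
theorem gmm_sandwich_efficiency
    {Ω : Type*} [mΩ : MeasurableSpace Ω]
    (μ : Measure Ω) [IsProbabilityMeasure μ]
    {d : ℕ}
    (m mstar : Ω → Fin d → ℝ)
    (hm2 : ∀ k, MemLp (fun ω => m ω k) 2 μ)
    (hmstar2 : ∀ k, MemLp (fun ω => mstar ω k) 2 μ)
    (hmm : ∀ k j, Integrable (fun ω => m ω k * m ω j) μ)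
    (hmms : ∀ k j, Integrable (fun ω => m ω k * mstar ω j) μ)
    (hmsms : ∀ k j, Integrable (fun ω => mstar ω k * mstar ω j) μ)
    (G Gstar M : Matrix (Fin d) (Fin d) ℝ)
    (hG : G = Matrix.of fun k j => ∫ ω, m ω k * mstar ω j ∂μ)
    (hGstar : Gstar = Matrix.of fun k j => ∫ ω, mstar ω k * mstar ω j ∂μ)
    (hM : M = Matrix.of fun k j => ∫ ω, m ω k * m ω j ∂μ)
    (hGinv : IsUnit G.det) (hGstarinv : IsUnit Gstar.det) :
    (G⁻¹ * M * (G⁻¹)ᵀ - Gstar⁻¹).PosSemidef := by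
  -- symmetry facts
  have hMsym : Mᵀ = M := by
    subst hM; ext k j; simp [Matrix.transpose_apply, mul_comm]
  have hGssym : Gstarᵀ = Gstar := by
    subst hGstar; ext k j; simp [Matrix.transpose_apply, mul_comm]
  have hGsinvsym : (Gstar⁻¹)ᵀ = Gstar⁻¹ := by
    rw [Matrix.transpose_nonsing_inv, hGssym]
  -- the inner matrix
  set S : Matrix (Fin d) (Fin d) ℝ := M - G * Gstar⁻¹ * Gᵀ with hS
  have hSsym : Sᵀ = S := by
    rw [hS, Matrix.transpose_sub, hMsym, Matrix.transpose_mul, Matrix.transpose_mul,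
      Matrix.transpose_transpose, hGsinvsym, Matrix.mul_assoc]
  have hSpsd : S.PosSemidef := by
    rw [Matrix.posSemidef_iff_dotProduct_mulVec]
    constructor
    · rw [Matrix.IsHermitian, Matrix.conjTranspose_eq_transpose_of_trivial, hSsym]
    · intro x
      simp only [star_trivial]
      set c : Fin d → ℝ := (Gstar⁻¹ * Gᵀ) *ᵥ x with hc
      -- key integral identities
      have e1 : ∫ ω, (∑ k, x k * m ω k) * (∑ j, x j * m ω j) ∂μ = x ⬝ᵥ M *ᵥ x := by
        rw [gmm_aux_integral m m hmm, gmm_dot_expand]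
        subst hM; rfl
      have e2 : ∫ ω, (∑ k, x k * m ω k) * (∑ j, c j * mstar ω j) ∂μ = x ⬝ᵥ G *ᵥ c := by
        rw [gmm_aux_integral m mstar hmms, gmm_dot_expand]
        subst hG; rfl
      have e2' : ∫ ω, (∑ k, c k * mstar ω k) * (∑ j, x j * m ω j) ∂μ
          = x ⬝ᵥ G *ᵥ c := by
        rw [← e2]
        congr 1; funext ω; ring
      have e3 : ∫ ω, (∑ k, c k * mstar ω k) * (∑ j, c j * mstar ω j) ∂μ
          = c ⬝ᵥ Gstar *ᵥ c := by
        rw [gmm_aux_integral mstar mstar hmsms, gmm_dot_expand]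
        subst hGstar; rfl
      -- matrix algebra identities
      have e4 : c ⬝ᵥ Gstar *ᵥ c = x ⬝ᵥ G *ᵥ c := by
        have h1 : Gstar *ᵥ c = Gᵀ *ᵥ x := by
          rw [hc, Matrix.mulVec_mulVec, ← Matrix.mul_assoc,
            Matrix.mul_nonsing_inv _ hGstarinv, Matrix.one_mul]
        rw [h1, Matrix.mulVec_transpose, dotProduct_comm, ← Matrix.dotProduct_mulVec]
      have e5 : x ⬝ᵥ (G * Gstar⁻¹ * Gᵀ) *ᵥ x = x ⬝ᵥ G *ᵥ c := by
        rw [hc, Matrix.mul_assoc, ← Matrix.mulVec_mulVec]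
      -- integrability
      have hI1 := gmm_aux_integrable (μ := μ) m m hmm x x
      have hI2 := gmm_aux_integrable (μ := μ) m mstar hmms x c
      have hI3 := gmm_aux_integrable (μ := μ) mstar mstar hmsms c c
      have hI4 := gmm_aux_integrable (μ := μ) mstar m (fun k j => (hmms j k).congr
        (by filter_upwards with ω; ring)) c x
      -- the integral of the square
      have hI : ∫ ω, ((∑ k, x k * m ω k) - (∑ j, c j * mstar ω j))^2 ∂μ
          = x ⬝ᵥ M *ᵥ x - x ⬝ᵥ G *ᵥ c := by
        have hfun : (fun ω => ((∑ k, x k * m ω k) - (∑ j, c j * mstar ω j))^2)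
            = fun ω => ((∑ k, x k * m ω k) * (∑ j, x j * m ω j)
                - (∑ k, x k * m ω k) * (∑ j, c j * mstar ω j))
              - ((∑ k, c k * mstar ω k) * (∑ j, x j * m ω j)
                - (∑ k, c k * mstar ω k) * (∑ j, c j * mstar ω j)) := by
          funext ω; ring
        rw [show (∫ ω, ((∑ k, x k * m ω k) - (∑ j, c j * mstar ω j))^2 ∂μ)
            = ∫ ω, (((∑ k, x k * m ω k) * (∑ j, x j * m ω j)
                - (∑ k, x k * m ω k) * (∑ j, c j * mstar ω j))
              - ((∑ k, c k * mstar ω k) * (∑ j, x j * m ω j)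
                - (∑ k, c k * mstar ω k) * (∑ j, c j * mstar ω j))) ∂μ from by
          exact integral_congr_ae (Filter.Eventually.of_forall fun ω => by ring)]
        have hA : Integrable (fun ω => (∑ k, x k * m ω k) * (∑ j, x j * m ω j)
            - (∑ k, x k * m ω k) * (∑ j, c j * mstar ω j)) μ := hI1.sub hI2
        have hB : Integrable (fun ω => (∑ k, c k * mstar ω k) * (∑ j, x j * m ω j)
            - (∑ k, c k * mstar ω k) * (∑ j, c j * mstar ω j)) μ := hI4.sub hI3
        rw [integral_sub hA hB, integral_sub hI1 hI2,
          integral_sub hI4 hI3, e1, e2, e2', e3, e4]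
        ring
      have hnn : (0:ℝ) ≤ ∫ ω, ((∑ k, x k * m ω k) - (∑ j, c j * mstar ω j))^2 ∂μ :=
        integral_nonneg fun ω => sq_nonneg _
      rw [hI] at hnn
      rw [hS, Matrix.sub_mulVec, dotProduct_sub, e5]
      linarith
  -- conjugation
  have hconj : G⁻¹ * M * (G⁻¹)ᵀ - Gstar⁻¹ = G⁻¹ * S * (G⁻¹)ᵀ := by
    rw [hS, mul_sub, sub_mul]
    congr 1
    rw [← Matrix.mul_assoc, ← Matrix.mul_assoc, Matrix.nonsing_inv_mul _ hGinv,
      Matrix.one_mul, Matrix.mul_assoc, Matrix.transpose_nonsing_inv,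
      Matrix.mul_nonsing_inv _ (by rwa [Matrix.det_transpose]), Matrix.mul_one]
  rw [hconj]
  have := hSpsd.mul_mul_conjTranspose_same G⁻¹
  rwa [Matrix.conjTranspose_eq_transpose_of_trivial] at this
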